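/- arXiv:2407.20068 — 13 statements merged into one kernel-verified Lean document; each statement's English description precedes it below -/
import Mathlib

section
/- Let f₁ : ℝ → ℝ be strictly positive, measurable and integrable, and let F₂ : ℝ → ℝ be nondecreasing with 0 ≤ F₂(x) ≤ 1 and F₂(x) < 1 for all x. Suppose there exist constants k₁, k₂ ≥ 0 such that for all x, b ∈ ℝ: |ln f₁(x) − ln f₁(x+b)| ≤ k₁·|b| and |ln(1 − F₂(x)) − ln(1 − F₂(x+b))| ≤ k₂·|b|. Let Δ > 0, let S⊥ and S⊤ be disjoint finite index sets, let T, q, q' be real-valued functions on S⊥ ∪ S⊤ with |q(i) − q'(i)| ≤ Δ for every i. Then I(q) ≤ exp(k₁·Δ + 2·k₂·Δ·|S⊤|) · I(q'), where for a query function u the SVT output probability is I(u) = ∫_ℝ f₁(t) · ∏_{i∈S⊥} F₂(T(i)+t−u(i)) · ∏_{j∈S⊤} (1 − F₂(T(j)+t−u(j))) dt. -/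
open MeasureTheory Real

/-- Core DP inequality of SVT in the non-monotonic query setting. -/
theorem svt_privacy_nonmonotonic
    (f₁ F₂ : ℝ → ℝ)
    (hf_pos : ∀ x, 0 < f₁ x)
    (hf_meas : Measurable f₁)
    (hf_int : Integrable f₁)
    (hF_mono : Monotone F₂)
    (hF_nonneg : ∀ x, 0 ≤ F₂ x)
    (hF_le_one : ∀ x, F₂ x ≤ 1)
    (hF_lt_one : ∀ x, F₂ x < 1)
    (k₁ k₂ : ℝ) (hk₁ : 0 ≤ k₁) (hk₂ : 0 ≤ k₂)
    (hlip₁ : ∀ x b : ℝ, |Real.log (f₁ x) - Real.log (f₁ (x + b))| ≤ k₁ * |b|)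
    (hlip₂ : ∀ x b : ℝ,
      |Real.log (1 - F₂ x) - Real.log (1 - F₂ (x + b))| ≤ k₂ * |b|)
    {ι : Type*} [DecidableEq ι] (Sbot Stop : Finset ι) (hdisj : Disjoint Sbot Stop)
    (Δ : ℝ) (hΔ : 0 < Δ)
    (T q q' : ι → ℝ)
    (hsens : ∀ i ∈ Sbot ∪ Stop, |q i - q' i| ≤ Δ) :
    (∫ t : ℝ, f₁ t * ((∏ i ∈ Sbot, F₂ (T i + t - q i)) *
        ∏ j ∈ Stop, (1 - F₂ (T j + t - q j)))) ≤
      Real.exp (k₁ * Δ + 2 * k₂ * Δ * Stop.card) *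
      (∫ t : ℝ, f₁ t * ((∏ i ∈ Sbot, F₂ (T i + t - q' i)) *
        ∏ j ∈ Stop, (1 - F₂ (T j + t - q' j)))) := by
  have hF_meas : Measurable F₂ := hF_mono.measurable
  have hone : ∀ x : ℝ, 0 < 1 - F₂ x := fun x => by linarith [hF_lt_one x]
  set C : ℝ := k₁ * Δ + 2 * k₂ * Δ * Stop.card with hC
  set g : (ι → ℝ) → ℝ → ℝ := fun u t =>
    f₁ t * ((∏ i ∈ Sbot, F₂ (T i + t - u i)) *
      ∏ j ∈ Stop, (1 - F₂ (T j + t - u j))) with hg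
  have hg_meas : ∀ u, Measurable (g u) := by
    intro u
    apply hf_meas.mul
    apply Measurable.mul
    · exact Finset.measurable_prod _ fun i _ =>
        hF_meas.comp (by fun_prop)
    · exact Finset.measurable_prod _ fun j _ =>
        measurable_const.sub (hF_meas.comp (by fun_prop))
  have hg_nonneg : ∀ u t, 0 ≤ g u t := by
    intro u t
    apply mul_nonneg (hf_pos t).le
    exact mul_nonneg (Finset.prod_nonneg fun i _ => hF_nonneg _)
      (Finset.prod_nonneg fun j _ => (hone _).le)
  have hg_le : ∀ u t, g u t ≤ f₁ t := by
    intro u t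
    have h1 : (∏ i ∈ Sbot, F₂ (T i + t - u i)) *
        ∏ j ∈ Stop, (1 - F₂ (T j + t - u j)) ≤ 1 := by
      apply mul_le_one₀
      · exact Finset.prod_le_one (fun i _ => hF_nonneg _) (fun i _ => hF_le_one _)
      · exact Finset.prod_nonneg fun j _ => (hone _).le
      · exact Finset.prod_le_one (fun j _ => (hone _).le)
          (fun j _ => by linarith [hF_nonneg (T j + t - u j)])
    calc g u t ≤ f₁ t * 1 :=
          mul_le_mul_of_nonneg_left h1 (hf_pos t).le
      _ = f₁ t := mul_one _
  have hg_int : ∀ u, Integrable (g u) := fun u =>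
    hf_int.mono (hg_meas u).aestronglyMeasurable (ae_of_all _ fun t => by
      rw [Real.norm_eq_abs, Real.norm_eq_abs, abs_of_nonneg (hg_nonneg u t),
        abs_of_nonneg (hf_pos t).le]
      exact hg_le u t)
  have key : ∀ s : ℝ, g q (s - Δ) ≤ Real.exp C * g q' s := by
    intro s
    -- density bound
    have hf : f₁ (s - Δ) ≤ Real.exp (k₁ * Δ) * f₁ s := by
      have h := hlip₁ s (-Δ)
      rw [abs_neg, abs_of_pos hΔ] at h
      have h2 : Real.log (f₁ (s + -Δ)) - Real.log (f₁ s) ≤ k₁ * Δ := by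
        have := abs_le.mp h
        linarith [this.1]
      have h3 : Real.log (f₁ (s - Δ)) ≤ k₁ * Δ + Real.log (f₁ s) := by
        rw [show s - Δ = s + -Δ by ring]; linarith
      calc f₁ (s - Δ) = Real.exp (Real.log (f₁ (s - Δ))) :=
            (Real.exp_log (hf_pos _)).symm
        _ ≤ Real.exp (k₁ * Δ + Real.log (f₁ s)) := Real.exp_le_exp.mpr h3
        _ = Real.exp (k₁ * Δ) * f₁ s := by
            rw [Real.exp_add, Real.exp_log (hf_pos s)]
    -- bottom factors
    have hbot : (∏ i ∈ Sbot, F₂ (T i + (s - Δ) - q i)) ≤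
        ∏ i ∈ Sbot, F₂ (T i + s - q' i) := by
      apply Finset.prod_le_prod (fun i _ => hF_nonneg _)
      intro i hi
      apply hF_mono
      have := abs_le.mp (hsens i (Finset.mem_union_left _ hi))
      linarith [this.1]
    -- top factors
    have htop : ∀ j ∈ Stop, 1 - F₂ (T j + (s - Δ) - q j) ≤
        Real.exp (2 * k₂ * Δ) * (1 - F₂ (T j + s - q' j)) := by
      intro j hj
      set x : ℝ := T j + (s - Δ) - q j with hx
      set b : ℝ := Δ + q j - q' j with hb
      have hxb : x + b = T j + s - q' j := by rw [hx, hb]; ring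
      have hbabs : |b| ≤ 2 * Δ := by
        have := abs_le.mp (hsens j (Finset.mem_union_right _ hj))
        rw [abs_le]; constructor <;> [linarith [this.2]; linarith [this.1]]
      have h := hlip₂ x b
      have h2 : k₂ * |b| ≤ k₂ * (2 * Δ) := mul_le_mul_of_nonneg_left hbabs hk₂
      have h3 : Real.log (1 - F₂ x) - Real.log (1 - F₂ (x + b)) ≤ 2 * k₂ * Δ := by
        have := abs_le.mp h
        nlinarith [this.2]
      calc 1 - F₂ x = Real.exp (Real.log (1 - F₂ x)) :=
            (Real.exp_log (hone _)).symm
        _ ≤ Real.exp (2 * k₂ * Δ + Real.log (1 - F₂ (x + b))) :=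
            Real.exp_le_exp.mpr (by linarith)
        _ = Real.exp (2 * k₂ * Δ) * (1 - F₂ (x + b)) := by
            rw [Real.exp_add, Real.exp_log (hone _)]
        _ = Real.exp (2 * k₂ * Δ) * (1 - F₂ (T j + s - q' j)) := by rw [hxb]
    have htopprod : (∏ j ∈ Stop, (1 - F₂ (T j + (s - Δ) - q j))) ≤
        Real.exp (2 * k₂ * Δ * Stop.card) *
          ∏ j ∈ Stop, (1 - F₂ (T j + s - q' j)) := by
      calc (∏ j ∈ Stop, (1 - F₂ (T j + (s - Δ) - q j)))
          ≤ ∏ j ∈ Stop, (Real.exp (2 * k₂ * Δ) * (1 - F₂ (T j + s - q' j))) :=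
            Finset.prod_le_prod (fun j _ => (hone _).le) htop
        _ = (∏ _j ∈ Stop, Real.exp (2 * k₂ * Δ)) *
              ∏ j ∈ Stop, (1 - F₂ (T j + s - q' j)) := Finset.prod_mul_distrib
        _ = Real.exp (2 * k₂ * Δ * Stop.card) *
              ∏ j ∈ Stop, (1 - F₂ (T j + s - q' j)) := by
            rw [Finset.prod_const, ← Real.exp_nat_mul]
            congr 1
            ring
    have hprodnn : 0 ≤ (∏ i ∈ Sbot, F₂ (T i + (s - Δ) - q i)) :=
      Finset.prod_nonneg fun i _ => hF_nonneg _
    have hprodnn' : 0 ≤ (∏ i ∈ Sbot, F₂ (T i + s - q' i)) :=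
      Finset.prod_nonneg fun i _ => hF_nonneg _
    have htopnn : 0 ≤ (∏ j ∈ Stop, (1 - F₂ (T j + (s - Δ) - q j))) :=
      Finset.prod_nonneg fun j _ => (hone _).le
    have htopnn' : 0 ≤ Real.exp (2 * k₂ * Δ * Stop.card) *
        ∏ j ∈ Stop, (1 - F₂ (T j + s - q' j)) :=
      mul_nonneg (Real.exp_pos _).le (Finset.prod_nonneg fun j _ => (hone _).le)
    have hmid : (∏ i ∈ Sbot, F₂ (T i + (s - Δ) - q i)) *
        (∏ j ∈ Stop, (1 - F₂ (T j + (s - Δ) - q j))) ≤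
        (∏ i ∈ Sbot, F₂ (T i + s - q' i)) *
          (Real.exp (2 * k₂ * Δ * Stop.card) *
            ∏ j ∈ Stop, (1 - F₂ (T j + s - q' j))) :=
      mul_le_mul hbot htopprod htopnn hprodnn'
    have hmidnn : 0 ≤ (∏ i ∈ Sbot, F₂ (T i + (s - Δ) - q i)) *
        (∏ j ∈ Stop, (1 - F₂ (T j + (s - Δ) - q j))) :=
      mul_nonneg hprodnn htopnn
    calc g q (s - Δ)
        = f₁ (s - Δ) * ((∏ i ∈ Sbot, F₂ (T i + (s - Δ) - q i)) *
            ∏ j ∈ Stop, (1 - F₂ (T j + (s - Δ) - q j))) := rfl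
      _ ≤ (Real.exp (k₁ * Δ) * f₁ s) *
            ((∏ i ∈ Sbot, F₂ (T i + s - q' i)) *
              (Real.exp (2 * k₂ * Δ * Stop.card) *
                ∏ j ∈ Stop, (1 - F₂ (T j + s - q' j)))) :=
          mul_le_mul hf hmid hmidnn
            (mul_nonneg (Real.exp_pos _).le (hf_pos s).le)
      _ = Real.exp C * g q' s := by
          rw [hg, hC, Real.exp_add]; ring
  have hshift : (∫ t : ℝ, g q t) = ∫ s : ℝ, g q (s - Δ) :=
    (integral_sub_right_eq_self (g q) Δ).symm
  calc (∫ t : ℝ, g q t) = ∫ s : ℝ, g q (s - Δ) := hshift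
    _ ≤ ∫ s : ℝ, Real.exp C * g q' s := by
        apply integral_mono ((hg_int q).comp_sub_right Δ)
          ((hg_int q').const_mul _) key
    _ = Real.exp C * ∫ t : ℝ, g q' t := integral_const_mul _ _
end

section
/- Let f₁ : ℝ → ℝ be strictly positive, measurable and integrable, and let F₂ : ℝ → ℝ be nondecreasing with 0 ≤ F₂(x) ≤ 1 and F₂(x) < 1 for all x. Suppose there exist constants k₁, k₂ ≥ 0 such that for all x, b ∈ ℝ: |ln f₁(x) − ln f₁(x+b)| ≤ k₁·|b| and |ln(1 − F₂(x)) − ln(1 − F₂(x+b))| ≤ k₂·|b|. Let Δ > 0, let S⊥ and S⊤ be disjoint finite index sets, let T, q, q' be real-valued functions on S⊥ ∪ S⊤ satisfying the monotone condition q'(i) − Δ ≤ q(i) ≤ q'(i) for every i. Then I(q) ≤ exp(k₁·Δ + k₂·Δ·|S⊤|) · I(q'), where for a query function u the SVT output probability is I(u) = ∫_ℝ f₁(t) · ∏_{i∈S⊥} F₂(T(i)+t−u(i)) · ∏_{j∈S⊤} (1 − F₂(T(j)+t−u(j))) dt. -/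
open MeasureTheory Real

/-- Core DP inequality of SVT in the monotonic query setting. -/
theorem svt_privacy_monotonic
    (f₁ F₂ : ℝ → ℝ)
    (hf_pos : ∀ x, 0 < f₁ x)
    (hf_meas : Measurable f₁)
    (hf_int : Integrable f₁)
    (hF_mono : Monotone F₂)
    (hF_nonneg : ∀ x, 0 ≤ F₂ x)
    (hF_le_one : ∀ x, F₂ x ≤ 1)
    (hF_lt_one : ∀ x, F₂ x < 1)
    (k₁ k₂ : ℝ) (hk₁ : 0 ≤ k₁) (hk₂ : 0 ≤ k₂)
    (hlip₁ : ∀ x b : ℝ, |Real.log (f₁ x) - Real.log (f₁ (x + b))| ≤ k₁ * |b|)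
    (hlip₂ : ∀ x b : ℝ,
      |Real.log (1 - F₂ x) - Real.log (1 - F₂ (x + b))| ≤ k₂ * |b|)
    {ι : Type*} [DecidableEq ι] (Sbot Stop : Finset ι) (hdisj : Disjoint Sbot Stop)
    (Δ : ℝ) (hΔ : 0 < Δ)
    (T q q' : ι → ℝ)
    (hmono_lo : ∀ i ∈ Sbot ∪ Stop, q' i - Δ ≤ q i)
    (hmono_hi : ∀ i ∈ Sbot ∪ Stop, q i ≤ q' i) :
    (∫ t : ℝ, f₁ t * ((∏ i ∈ Sbot, F₂ (T i + t - q i)) *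
        ∏ j ∈ Stop, (1 - F₂ (T j + t - q j)))) ≤
      Real.exp (k₁ * Δ + k₂ * Δ * Stop.card) *
      (∫ t : ℝ, f₁ t * ((∏ i ∈ Sbot, F₂ (T i + t - q' i)) *
        ∏ j ∈ Stop, (1 - F₂ (T j + t - q' j)))) := by
  have hF₂meas : Measurable F₂ := hF_mono.measurable
  have hF_pos' : ∀ x, 0 < 1 - F₂ x := fun x => by linarith [hF_lt_one x]
  have exp_bound : ∀ a b c : ℝ, 0 < a → 0 < b →
      Real.log a - Real.log b ≤ c → a ≤ Real.exp c * b := by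
    intro a b c ha hb hle
    calc a = Real.exp (Real.log a) := (Real.exp_log ha).symm
      _ ≤ Real.exp (c + Real.log b) := Real.exp_le_exp.mpr (by linarith)
      _ = Real.exp c * b := by rw [Real.exp_add, Real.exp_log hb]
  -- integrability of the SVT integrand for any query function
  have hInt : ∀ u : ι → ℝ, Integrable (fun t : ℝ => f₁ t *
      ((∏ i ∈ Sbot, F₂ (T i + t - u i)) * ∏ j ∈ Stop, (1 - F₂ (T j + t - u j)))) := by
    intro u
    have hmeas : Measurable (fun t : ℝ => f₁ t *
        ((∏ i ∈ Sbot, F₂ (T i + t - u i)) * ∏ j ∈ Stop, (1 - F₂ (T j + t - u j)))) := by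
      have haff : ∀ c d : ℝ, Measurable fun t : ℝ => c + t - d := fun c d =>
        (measurable_const.add measurable_id).sub measurable_const
      apply hf_meas.mul
      apply Measurable.mul
      · exact Finset.measurable_prod _ fun i _ => hF₂meas.comp (haff _ _)
      · exact Finset.measurable_prod _ fun j _ =>
          measurable_const.sub (hF₂meas.comp (haff _ _))
    refine hf_int.mono hmeas.aestronglyMeasurable ?_
    filter_upwards with t
    rw [Real.norm_eq_abs, Real.norm_eq_abs, abs_of_pos (hf_pos t), abs_mul,
      abs_of_pos (hf_pos t)]
    have h1 : 0 ≤ ∏ i ∈ Sbot, F₂ (T i + t - u i) :=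
      Finset.prod_nonneg fun i _ => hF_nonneg _
    have h2 : (∏ i ∈ Sbot, F₂ (T i + t - u i)) ≤ 1 :=
      Finset.prod_le_one (fun i _ => hF_nonneg _) fun i _ => hF_le_one _
    have h3 : 0 ≤ ∏ j ∈ Stop, (1 - F₂ (T j + t - u j)) :=
      Finset.prod_nonneg fun j _ => le_of_lt (hF_pos' _)
    have h4 : (∏ j ∈ Stop, (1 - F₂ (T j + t - u j))) ≤ 1 :=
      Finset.prod_le_one (fun j _ => le_of_lt (hF_pos' _))
        fun j _ => by linarith [hF_nonneg (T j + t - u j)]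
    rw [abs_of_nonneg (mul_nonneg h1 h3)]
    have h5 : (∏ i ∈ Sbot, F₂ (T i + t - u i)) * ∏ j ∈ Stop, (1 - F₂ (T j + t - u j)) ≤ 1 :=
      mul_le_one₀ h2 h3 h4
    calc f₁ t * ((∏ i ∈ Sbot, F₂ (T i + t - u i)) * ∏ j ∈ Stop, (1 - F₂ (T j + t - u j)))
        ≤ f₁ t * 1 := mul_le_mul_of_nonneg_left h5 (hf_pos t).le
      _ = f₁ t := mul_one _
  -- pointwise bound after shifting by Δ
  have hpt : ∀ s : ℝ, f₁ (s - Δ) *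
      ((∏ i ∈ Sbot, F₂ (T i + (s - Δ) - q i)) *
        ∏ j ∈ Stop, (1 - F₂ (T j + (s - Δ) - q j))) ≤
      Real.exp (k₁ * Δ + k₂ * Δ * Stop.card) *
      (f₁ s * ((∏ i ∈ Sbot, F₂ (T i + s - q' i)) *
        ∏ j ∈ Stop, (1 - F₂ (T j + s - q' j)))) := by
    intro s
    have hA : f₁ (s - Δ) ≤ Real.exp (k₁ * Δ) * f₁ s := by
      refine exp_bound _ _ _ (hf_pos _) (hf_pos _) ?_
      have h := hlip₁ (s - Δ) Δ
      rw [sub_add_cancel, abs_of_pos hΔ] at h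
      exact (abs_le.mp h).2
    have hB : (∏ i ∈ Sbot, F₂ (T i + (s - Δ) - q i)) ≤
        ∏ i ∈ Sbot, F₂ (T i + s - q' i) := by
      refine Finset.prod_le_prod (fun i _ => hF_nonneg _) fun i hi => ?_
      have hlo := hmono_lo i (Finset.mem_union_left _ hi)
      exact hF_mono (by linarith)
    have hCel : ∀ j ∈ Stop, 1 - F₂ (T j + (s - Δ) - q j) ≤
        Real.exp (k₂ * Δ) * (1 - F₂ (T j + s - q' j)) := by
      intro j hj
      have hhi := hmono_hi j (Finset.mem_union_right _ hj)
      have step1 : 1 - F₂ (T j + (s - Δ) - q j) ≤ 1 - F₂ (T j + (s - Δ) - q' j) := by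
        have := hF_mono (show T j + (s - Δ) - q' j ≤ T j + (s - Δ) - q j by linarith)
        linarith
      have step2 : 1 - F₂ (T j + (s - Δ) - q' j) ≤
          Real.exp (k₂ * Δ) * (1 - F₂ (T j + s - q' j)) := by
        refine exp_bound _ _ _ (hF_pos' _) (hF_pos' _) ?_
        have h := hlip₂ (T j + (s - Δ) - q' j) Δ
        rw [abs_of_pos hΔ] at h
        have harg : T j + (s - Δ) - q' j + Δ = T j + s - q' j := by ring
        rw [harg] at h
        exact (abs_le.mp h).2
      linarith
    have hC : (∏ j ∈ Stop, (1 - F₂ (T j + (s - Δ) - q j))) ≤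
        Real.exp (k₂ * Δ * Stop.card) * ∏ j ∈ Stop, (1 - F₂ (T j + s - q' j)) := by
      calc (∏ j ∈ Stop, (1 - F₂ (T j + (s - Δ) - q j)))
          ≤ ∏ j ∈ Stop, (Real.exp (k₂ * Δ) * (1 - F₂ (T j + s - q' j))) :=
            Finset.prod_le_prod (fun j _ => le_of_lt (hF_pos' _)) hCel
        _ = Real.exp (k₂ * Δ) ^ Stop.card * ∏ j ∈ Stop, (1 - F₂ (T j + s - q' j)) := by
            rw [Finset.prod_mul_distrib, Finset.prod_const]
        _ = Real.exp (k₂ * Δ * Stop.card) * ∏ j ∈ Stop, (1 - F₂ (T j + s - q' j)) := by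
            rw [← Real.exp_nat_mul]; congr 1; ring
    have hBnn : 0 ≤ ∏ i ∈ Sbot, F₂ (T i + (s - Δ) - q i) :=
      Finset.prod_nonneg fun i _ => hF_nonneg _
    have hCnn : 0 ≤ ∏ j ∈ Stop, (1 - F₂ (T j + (s - Δ) - q j)) :=
      Finset.prod_nonneg fun j _ => le_of_lt (hF_pos' _)
    have hB'nn : 0 ≤ ∏ i ∈ Sbot, F₂ (T i + s - q' i) :=
      Finset.prod_nonneg fun i _ => hF_nonneg _
    have hC'nn : 0 ≤ Real.exp (k₂ * Δ * Stop.card) * ∏ j ∈ Stop, (1 - F₂ (T j + s - q' j)) :=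
      mul_nonneg (Real.exp_pos _).le (Finset.prod_nonneg fun j _ => le_of_lt (hF_pos' _))
    have hmain : f₁ (s - Δ) *
        ((∏ i ∈ Sbot, F₂ (T i + (s - Δ) - q i)) *
          ∏ j ∈ Stop, (1 - F₂ (T j + (s - Δ) - q j))) ≤
        (Real.exp (k₁ * Δ) * f₁ s) *
        ((∏ i ∈ Sbot, F₂ (T i + s - q' i)) *
          (Real.exp (k₂ * Δ * Stop.card) * ∏ j ∈ Stop, (1 - F₂ (T j + s - q' j)))) := by
      have h1 : (∏ i ∈ Sbot, F₂ (T i + (s - Δ) - q i)) *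
          (∏ j ∈ Stop, (1 - F₂ (T j + (s - Δ) - q j))) ≤
          (∏ i ∈ Sbot, F₂ (T i + s - q' i)) *
          (Real.exp (k₂ * Δ * Stop.card) * ∏ j ∈ Stop, (1 - F₂ (T j + s - q' j))) :=
        mul_le_mul hB hC hCnn hB'nn
      exact mul_le_mul hA h1 (mul_nonneg hBnn hCnn) (mul_nonneg (Real.exp_pos _).le (hf_pos s).le)
    calc f₁ (s - Δ) *
        ((∏ i ∈ Sbot, F₂ (T i + (s - Δ) - q i)) *
          ∏ j ∈ Stop, (1 - F₂ (T j + (s - Δ) - q j)))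
        ≤ (Real.exp (k₁ * Δ) * f₁ s) *
          ((∏ i ∈ Sbot, F₂ (T i + s - q' i)) *
            (Real.exp (k₂ * Δ * Stop.card) * ∏ j ∈ Stop, (1 - F₂ (T j + s - q' j)))) := hmain
      _ = Real.exp (k₁ * Δ + k₂ * Δ * Stop.card) *
          (f₁ s * ((∏ i ∈ Sbot, F₂ (T i + s - q' i)) *
            ∏ j ∈ Stop, (1 - F₂ (T j + s - q' j)))) := by
          rw [Real.exp_add]; ring
  calc (∫ t : ℝ, f₁ t * ((∏ i ∈ Sbot, F₂ (T i + t - q i)) *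
        ∏ j ∈ Stop, (1 - F₂ (T j + t - q j))))
      = ∫ s : ℝ, f₁ (s - Δ) * ((∏ i ∈ Sbot, F₂ (T i + (s - Δ) - q i)) *
        ∏ j ∈ Stop, (1 - F₂ (T j + (s - Δ) - q j))) :=
        (integral_sub_right_eq_self (fun t : ℝ => f₁ t * ((∏ i ∈ Sbot, F₂ (T i + t - q i)) *
          ∏ j ∈ Stop, (1 - F₂ (T j + t - q j)))) Δ).symm
    _ ≤ ∫ s : ℝ, Real.exp (k₁ * Δ + k₂ * Δ * Stop.card) *
          (f₁ s * ((∏ i ∈ Sbot, F₂ (T i + s - q' i)) *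
            ∏ j ∈ Stop, (1 - F₂ (T j + s - q' j)))) :=
        integral_mono ((hInt q).comp_sub_right Δ) ((hInt q').const_mul _) hpt
    _ = Real.exp (k₁ * Δ + k₂ * Δ * Stop.card) *
        (∫ t : ℝ, f₁ t * ((∏ i ∈ Sbot, F₂ (T i + t - q' i)) *
          ∏ j ∈ Stop, (1 - F₂ (T j + t - q' j)))) :=
        integral_const_mul _ _
end

section
/- Let Δ, ε₁, ε₂ > 0 and let c ≥ 1 be a natural number. Define f₁(t) = (ε₁/(2Δ))·exp(−ε₁·|t|/Δ) (the Laplace density with scale Δ/ε₁) and F₂(x) = 1 − exp(−λx) for x ≥ 0, F₂(x) = 0 for x < 0, with rate λ = ε₂/(2cΔ) (the exponential CDF). Let S⊥ and S⊤ be disjoint finite index sets with |S⊤| ≤ c, and let T, q, q' be real-valued functions on S⊥ ∪ S⊤ with |q(i) − q'(i)| ≤ Δ for every i. Then I(q) ≤ exp(ε₁ + ε₂) · I(q'), where for a query function u the SVT output probability is I(u) = ∫_ℝ f₁(t) · ∏_{i∈S⊥} F₂(T(i)+t−u(i)) · ∏_{j∈S⊤} (1 − F₂(T(j)+t−u(j)))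 dt. -/
open MeasureTheory Real

/-- (ε₁+ε₂)-DP guarantee of SVT-Exp (Laplace threshold noise, exponential query noise). -/
theorem svt_exp_privacy
    (Δ ε₁ ε₂ : ℝ) (hΔ : 0 < Δ) (hε₁ : 0 < ε₁) (hε₂ : 0 < ε₂)
    (c : ℕ) (hc : 1 ≤ c)
    (f₁ F₂ : ℝ → ℝ)
    (hf₁ : ∀ t : ℝ, f₁ t = (ε₁ / (2 * Δ)) * Real.exp (-(ε₁ * |t|) / Δ))
    (hF₂ : ∀ x : ℝ, F₂ x =
      if 0 ≤ x then 1 - Real.exp (-(ε₂ / (2 * c * Δ)) * x) else 0)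
    {ι : Type*} [DecidableEq ι] (Sbot Stop : Finset ι) (hdisj : Disjoint Sbot Stop)
    (hcard : Stop.card ≤ c)
    (T q q' : ι → ℝ)
    (hsens : ∀ i ∈ Sbot ∪ Stop, |q i - q' i| ≤ Δ) :
    (∫ t : ℝ, f₁ t * ((∏ i ∈ Sbot, F₂ (T i + t - q i)) *
        ∏ j ∈ Stop, (1 - F₂ (T j + t - q j)))) ≤
      Real.exp (ε₁ + ε₂) *
      (∫ t : ℝ, f₁ t * ((∏ i ∈ Sbot, F₂ (T i + t - q' i)) *
        ∏ j ∈ Stop, (1 - F₂ (T j + t - q' j)))) := by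
  have hc0 : (0:ℝ) < (c:ℝ) := by exact_mod_cast Nat.lt_of_lt_of_le Nat.zero_lt_one hc
  set lam : ℝ := ε₂ / (2 * c * Δ) with hlam_def
  have hlam : 0 < lam := by
    apply div_pos hε₂
    positivity
  -- Basic facts about F₂
  have hF₂nonneg : ∀ x, 0 ≤ F₂ x := by
    intro x
    rw [hF₂ x]
    split_ifs with h
    · have : Real.exp (-lam * x) ≤ 1 := by
        rw [Real.exp_le_one_iff]
        nlinarith
      linarith
    · exact le_refl 0
  have hF₂le1 : ∀ x, F₂ x ≤ 1 := by
    intro x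
    rw [hF₂ x]
    split_ifs with h
    · have := Real.exp_pos (-lam * x)
      linarith
    · norm_num
  have hF₂mono : ∀ x y : ℝ, x ≤ y → F₂ x ≤ F₂ y := by
    intro x y hxy
    rw [hF₂ x, hF₂ y]
    split_ifs with h1 h2 h2
    · have : Real.exp (-lam * y) ≤ Real.exp (-lam * x) := by
        apply Real.exp_le_exp.2
        nlinarith
      linarith
    · exact absurd (h1.trans hxy) h2
    · have : Real.exp (-lam * y) ≤ 1 := by
        rw [Real.exp_le_one_iff]
        nlinarith [le_of_not_ge h1]
      linarith
    · exact le_refl 0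
  -- shift bound for the survival function
  have hshift : ∀ a s : ℝ, 0 ≤ s →
      1 - F₂ a ≤ Real.exp (lam * s) * (1 - F₂ (a + s)) := by
    intro a s hs
    rw [hF₂ a, hF₂ (a + s)]
    split_ifs with h1 h2 h2
    · -- 0 ≤ a, 0 ≤ a + s
      have : Real.exp (lam * s) * Real.exp (-lam * (a + s)) = Real.exp (-lam * a) := by
        rw [← Real.exp_add]; ring_nf
      simp only [sub_sub_cancel]
      linarith [this.ge, this.le]
    · exact absurd (le_trans h1 (by linarith)) h2
    · -- a < 0 ≤ a + s
      simp only [sub_sub_cancel, sub_zero]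
      have : Real.exp (lam * s) * Real.exp (-lam * (a + s)) = Real.exp (-lam * a) := by
        rw [← Real.exp_add]; ring_nf
      rw [this]
      apply Real.one_le_exp
      nlinarith [le_of_not_ge h1]
    · -- a + s < 0
      simp only [sub_zero]
      nlinarith [Real.one_le_exp (by positivity : (0:ℝ) ≤ lam * s)]
  -- pointwise facts about f₁
  have hf₁nonneg : ∀ t, 0 ≤ f₁ t := by
    intro t; rw [hf₁ t]; positivity
  have hf₁shift : ∀ t : ℝ, f₁ t ≤ Real.exp ε₁ * f₁ (t + Δ) := by
    intro t
    rw [hf₁ t, hf₁ (t + Δ)]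
    rw [mul_comm (Real.exp ε₁), mul_assoc, ← Real.exp_add]
    apply mul_le_mul_of_nonneg_left _ (by positivity)
    apply Real.exp_le_exp.2
    have habs : |t + Δ| ≤ |t| + Δ := by
      calc |t + Δ| ≤ |t| + |Δ| := abs_add_le t Δ
      _ = |t| + Δ := by rw [abs_of_pos hΔ]
    rw [div_le_iff₀ hΔ]
    have h2 : (-(ε₁ * |t + Δ|) / Δ + ε₁) * Δ = -(ε₁ * |t + Δ|) + ε₁ * Δ := by field_simp
    rw [h2]
    nlinarith
  -- abbreviations for the integrands
  set g : (ι → ℝ) → ℝ → ℝ := fun u t =>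
    f₁ t * ((∏ i ∈ Sbot, F₂ (T i + t - u i)) * ∏ j ∈ Stop, (1 - F₂ (T j + t - u j)))
    with hg_def
  have hg_nonneg : ∀ u t, 0 ≤ g u t := by
    intro u t
    apply mul_nonneg (hf₁nonneg t)
    apply mul_nonneg
    · exact Finset.prod_nonneg fun i _ => hF₂nonneg _
    · exact Finset.prod_nonneg fun j _ => by linarith [hF₂le1 (T j + t - q j), hF₂le1 (T j + t - u j)]
  -- key pointwise inequality
  have key : ∀ t : ℝ, g q t ≤ Real.exp (ε₁ + ε₂) * g q' (t + Δ) := by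
    intro t
    have hB : (∏ i ∈ Sbot, F₂ (T i + t - q i)) ≤ ∏ i ∈ Sbot, F₂ (T i + (t + Δ) - q' i) := by
      apply Finset.prod_le_prod (fun i _ => hF₂nonneg _)
      intro i hi
      apply hF₂mono
      have := hsens i (Finset.mem_union_left _ hi)
      have := abs_le.1 this
      linarith [this.1, this.2]
    have hC : (∏ j ∈ Stop, (1 - F₂ (T j + t - q j))) ≤
        Real.exp ε₂ * ∏ j ∈ Stop, (1 - F₂ (T j + (t + Δ) - q' j)) := by
      have step : ∀ j ∈ Stop, 1 - F₂ (T j + t - q j) ≤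
          Real.exp (lam * (2 * Δ)) * (1 - F₂ (T j + (t + Δ) - q' j)) := by
        intro j hj
        have hs := abs_le.1 (hsens j (Finset.mem_union_right _ hj))
        set s : ℝ := Δ + (q j - q' j) with hs_def
        have hs0 : 0 ≤ s := by linarith [hs.1]
        have hs2 : s ≤ 2 * Δ := by linarith [hs.2]
        have heq : T j + (t + Δ) - q' j = (T j + t - q j) + s := by ring
        rw [heq]
        calc 1 - F₂ (T j + t - q j)
            ≤ Real.exp (lam * s) * (1 - F₂ ((T j + t - q j) + s)) := hshift _ _ hs0
          _ ≤ Real.exp (lam * (2 * Δ)) * (1 - F₂ ((T j + t - q j) + s)) := by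
              apply mul_le_mul_of_nonneg_right
              · exact Real.exp_le_exp.2 (by nlinarith)
              · linarith [hF₂le1 ((T j + t - q j) + s)]
      calc (∏ j ∈ Stop, (1 - F₂ (T j + t - q j)))
          ≤ ∏ j ∈ Stop, (Real.exp (lam * (2 * Δ)) * (1 - F₂ (T j + (t + Δ) - q' j))) := by
            apply Finset.prod_le_prod
            · intro j hj; linarith [hF₂le1 (T j + t - q j)]
            · exact step
        _ = Real.exp (lam * (2 * Δ)) ^ Stop.card *
              ∏ j ∈ Stop, (1 - F₂ (T j + (t + Δ) - q' j)) := by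
            rw [Finset.prod_mul_distrib, Finset.prod_const]
        _ ≤ Real.exp ε₂ * ∏ j ∈ Stop, (1 - F₂ (T j + (t + Δ) - q' j)) := by
            apply mul_le_mul_of_nonneg_right
            · rw [← Real.exp_nat_mul]
              apply Real.exp_le_exp.2
              have hlam2 : lam * (2 * Δ) = ε₂ / c := by
                rw [hlam_def]; field_simp
              rw [hlam2]
              have hcd : (Stop.card : ℝ) ≤ (c : ℝ) := by exact_mod_cast hcard
              calc (Stop.card : ℝ) * (ε₂ / c) ≤ (c : ℝ) * (ε₂ / c) :=
                    mul_le_mul_of_nonneg_right hcd (by positivity)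
                _ = ε₂ := by field_simp
            · exact Finset.prod_nonneg fun j _ => by linarith [hF₂le1 (T j + (t + Δ) - q' j)]
    have hPb_nonneg : 0 ≤ ∏ i ∈ Sbot, F₂ (T i + t - q i) :=
      Finset.prod_nonneg fun i _ => hF₂nonneg _
    have hPt'_nonneg : 0 ≤ Real.exp ε₂ * ∏ j ∈ Stop, (1 - F₂ (T j + (t + Δ) - q' j)) := by
      apply mul_nonneg (Real.exp_pos _).le
      exact Finset.prod_nonneg fun j _ => by linarith [hF₂le1 (T j + (t + Δ) - q' j)]
    have hPt_nonneg : 0 ≤ ∏ j ∈ Stop, (1 - F₂ (T j + t - q j)) :=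
      Finset.prod_nonneg fun j _ => by linarith [hF₂le1 (T j + t - q j)]
    have hPb'_nonneg : 0 ≤ ∏ i ∈ Sbot, F₂ (T i + (t + Δ) - q' i) :=
      Finset.prod_nonneg fun i _ => hF₂nonneg _
    have hprod : (∏ i ∈ Sbot, F₂ (T i + t - q i)) * ∏ j ∈ Stop, (1 - F₂ (T j + t - q j)) ≤
        (∏ i ∈ Sbot, F₂ (T i + (t + Δ) - q' i)) *
          (Real.exp ε₂ * ∏ j ∈ Stop, (1 - F₂ (T j + (t + Δ) - q' j))) :=
      mul_le_mul hB hC hPt_nonneg hPb'_nonneg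
    have hmul : g q t ≤ (Real.exp ε₁ * f₁ (t + Δ)) *
        ((∏ i ∈ Sbot, F₂ (T i + (t + Δ) - q' i)) *
          (Real.exp ε₂ * ∏ j ∈ Stop, (1 - F₂ (T j + (t + Δ) - q' j)))) := by
      apply mul_le_mul (hf₁shift t) hprod
      · exact mul_nonneg hPb_nonneg hPt_nonneg
      · exact mul_nonneg (Real.exp_pos _).le (hf₁nonneg _)
    calc g q t ≤ (Real.exp ε₁ * f₁ (t + Δ)) *
        ((∏ i ∈ Sbot, F₂ (T i + (t + Δ) - q' i)) *
          (Real.exp ε₂ * ∏ j ∈ Stop, (1 - F₂ (T j + (t + Δ) - q' j)))) := hmul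
      _ = Real.exp (ε₁ + ε₂) * g q' (t + Δ) := by
          rw [Real.exp_add, hg_def]; ring
  -- measurability
  have hF₂meas : Measurable F₂ := by
    have : F₂ = fun x => if 0 ≤ x then 1 - Real.exp (-(ε₂ / (2 * c * Δ)) * x) else 0 :=
      funext hF₂
    rw [this]
    apply Measurable.ite
    · exact measurableSet_le measurable_const measurable_id
    · exact (measurable_const.sub ((measurable_const.mul measurable_id).exp))
    · exact measurable_const
  have hf₁meas : Measurable f₁ := by
    have : f₁ = fun t => (ε₁ / (2 * Δ)) * Real.exp (-(ε₁ * |t|) / Δ) := funext hf₁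
    rw [this]
    exact measurable_const.mul (((measurable_const.mul (_root_.continuous_abs.measurable)).neg.div_const Δ).exp)
  have hg_meas : ∀ u : ι → ℝ, Measurable (g u) := by
    intro u
    apply hf₁meas.mul
    apply Measurable.mul
    · apply Finset.measurable_prod
      intro i _
      exact hF₂meas.comp ((measurable_const.add measurable_id).sub measurable_const)
    · apply Finset.measurable_prod
      intro j _
      exact measurable_const.sub
        (hF₂meas.comp ((measurable_const.add measurable_id).sub measurable_const))
  -- integrability of f₁
  have hf₁int : Integrable f₁ := by
    have hk : 0 < ε₁ / Δ := div_pos hε₁ hΔ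
    have h_exp : Integrable (fun t : ℝ => Real.exp (-(ε₁ / Δ) * |t|)) := by
      have h1 : IntegrableOn (fun t : ℝ => Real.exp (-(ε₁ / Δ) * |t|)) (Set.Ioi 0) := by
        apply (exp_neg_integrableOn_Ioi 0 hk).congr_fun _ measurableSet_Ioi
        intro x hx
        simp only [Set.mem_Ioi] at hx
        show Real.exp (-(ε₁ / Δ) * x) = Real.exp (-(ε₁ / Δ) * |x|)
        rw [abs_of_pos hx]
      have h2 : IntegrableOn (fun t : ℝ => Real.exp (-(ε₁ / Δ) * |t|)) (Set.Iic 0) := by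
        rw [← Measure.map_neg_eq_self (volume : Measure ℝ)]
        have m : MeasurableEmbedding fun x : ℝ => -x :=
          (Homeomorph.neg ℝ).measurableEmbedding
        rw [m.integrableOn_map_iff]
        simp only [Function.comp_def, abs_neg, Set.neg_preimage, Set.neg_Iic, neg_zero]
        exact Iff.mpr integrableOn_Ici_iff_integrableOn_Ioi h1
      have := h2.union h1
      rwa [Set.Iic_union_Ioi, integrableOn_univ] at this
    have : f₁ = fun t => (ε₁ / (2 * Δ)) * Real.exp (-(ε₁ / Δ) * |t|) := by
      funext t
      rw [hf₁ t]
      congr 1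
      congr 1
      field_simp
    rw [this]
    exact h_exp.const_mul _
  -- integrability of g q'
  have hgq'int : Integrable (g q') := by
    apply hf₁int.mono' (hg_meas q').aestronglyMeasurable
    filter_upwards with t
    rw [Real.norm_eq_abs, abs_of_nonneg (hg_nonneg q' t)]
    have h1 : (∏ i ∈ Sbot, F₂ (T i + t - q' i)) ≤ 1 :=
      Finset.prod_le_one (fun i _ => hF₂nonneg _) (fun i _ => hF₂le1 _)
    have h2 : (∏ j ∈ Stop, (1 - F₂ (T j + t - q' j))) ≤ 1 :=
      Finset.prod_le_one (fun j _ => by linarith [hF₂le1 (T j + t - q' j)])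
        (fun j _ => by linarith [hF₂nonneg (T j + t - q' j)])
    have h1' : 0 ≤ ∏ i ∈ Sbot, F₂ (T i + t - q' i) :=
      Finset.prod_nonneg fun i _ => hF₂nonneg _
    have h2' : 0 ≤ ∏ j ∈ Stop, (1 - F₂ (T j + t - q' j)) :=
      Finset.prod_nonneg fun j _ => by linarith [hF₂le1 (T j + t - q' j)]
    calc g q' t ≤ f₁ t * 1 := by
          apply mul_le_mul_of_nonneg_left _ (hf₁nonneg t)
          calc (∏ i ∈ Sbot, F₂ (T i + t - q' i)) * ∏ j ∈ Stop, (1 - F₂ (T j + t - q' j))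
              ≤ 1 * 1 := mul_le_mul h1 h2 h2' zero_le_one
            _ = 1 := one_mul 1
      _ = f₁ t := mul_one _
  have hshift_int : Integrable (fun t => g q' (t + Δ)) := hgq'int.comp_add_right Δ
  -- conclude
  have hmono : (∫ t : ℝ, g q t) ≤ ∫ t : ℝ, Real.exp (ε₁ + ε₂) * g q' (t + Δ) := by
    apply integral_mono_of_nonneg
    · filter_upwards with t; exact hg_nonneg q t
    · exact hshift_int.const_mul _
    · filter_upwards with t; exact key t
  calc (∫ t : ℝ, g q t) ≤ ∫ t : ℝ, Real.exp (ε₁ + ε₂) * g q' (t + Δ) := hmono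
    _ = Real.exp (ε₁ + ε₂) * ∫ t : ℝ, g q' (t + Δ) := integral_const_mul _ _
    _ = Real.exp (ε₁ + ε₂) * ∫ t : ℝ, g q' t := by
        rw [integral_add_right_eq_self (g q') Δ]
end

section
/- Let Δ, ε₁, ε₂ > 0 and let c ≥ 1 be a natural number. Define f₁(t) = (ε₁/(2Δ))·exp(−ε₁·|t|/Δ) (the Laplace density with scale Δ/ε₁) and F₂(x) = exp(−exp(−x/β)) with scale β = 2cΔ/ε₂ (the Gumbel CDF with location 0). Let S⊥ and S⊤ be disjoint finite index sets with |S⊤| ≤ c, and let T, q, q' be real-valued functions on S⊥ ∪ S⊤ with |q(i) − q'(i)| ≤ Δ for every i. Then I(q) ≤ exp(ε₁ + ε₂) · I(q'), where for a query function u the SVT output probability is I(u) = ∫_ℝ f₁(t) · ∏_{i∈S⊥} F₂(T(i)+t−u(i)) · ∏_{j∈S⊤} (1 − F₂(T(j)+t−u(j))) dt. -/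
open MeasureTheory Real

lemma svt_aux_integrable_exp_neg_mul_abs {b : ℝ} (hb : 0 < b) :
    Integrable fun x : ℝ => Real.exp (-b * |x|) := by
  have hIci : IntegrableOn (fun x : ℝ => Real.exp (-b * |x|)) (Set.Ici 0) := by
    rw [integrableOn_Ici_iff_integrableOn_Ioi]
    refine (exp_neg_integrableOn_Ioi 0 hb).congr_fun (fun x hx => ?_) measurableSet_Ioi
    rw [abs_of_pos hx]
  rw [← integrableOn_univ, ← @Set.Iio_union_Ici _ _ (0 : ℝ), integrableOn_union]
  refine ⟨?_, hIci⟩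
  rw [← (Measure.measurePreserving_neg (volume : Measure ℝ)).integrableOn_comp_preimage
      (Homeomorph.neg ℝ).measurableEmbedding]
  simp only [Function.comp_def, abs_neg, Set.neg_preimage, Set.neg_Iio, neg_zero]
  exact hIci.mono_set Set.Ioi_subset_Ici_self

/-- (ε₁+ε₂)-DP guarantee of SVT-Gum (Laplace threshold noise, Gumbel query noise). -/
theorem svt_gum_privacy
    (Δ ε₁ ε₂ : ℝ) (hΔ : 0 < Δ) (hε₁ : 0 < ε₁) (hε₂ : 0 < ε₂)
    (c : ℕ) (hc : 1 ≤ c)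
    (f₁ F₂ : ℝ → ℝ)
    (hf₁ : ∀ t : ℝ, f₁ t = (ε₁ / (2 * Δ)) * Real.exp (-(ε₁ * |t|) / Δ))
    (hF₂ : ∀ x : ℝ, F₂ x =
      Real.exp (-Real.exp (-x / (2 * c * Δ / ε₂))))
    {ι : Type*} [DecidableEq ι] (Sbot Stop : Finset ι) (hdisj : Disjoint Sbot Stop)
    (hcard : Stop.card ≤ c)
    (T q q' : ι → ℝ)
    (hsens : ∀ i ∈ Sbot ∪ Stop, |q i - q' i| ≤ Δ) :
    (∫ t : ℝ, f₁ t * ((∏ i ∈ Sbot, F₂ (T i + t - q i)) *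
        ∏ j ∈ Stop, (1 - F₂ (T j + t - q j)))) ≤
      Real.exp (ε₁ + ε₂) *
      (∫ t : ℝ, f₁ t * ((∏ i ∈ Sbot, F₂ (T i + t - q' i)) *
        ∏ j ∈ Stop, (1 - F₂ (T j + t - q' j)))) := by
  have hc0 : (0 : ℝ) < c := by exact_mod_cast Nat.lt_of_lt_of_le Nat.zero_lt_one hc
  set β : ℝ := 2 * c * Δ / ε₂ with hβ
  have hβ0 : 0 < β := by positivity
  -- basic facts about F₂
  have hF₂nonneg : ∀ x, 0 ≤ F₂ x := fun x => by rw [hF₂]; positivity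
  have hF₂le1 : ∀ x, F₂ x ≤ 1 := fun x => by
    rw [hF₂, ← Real.exp_zero]
    exact Real.exp_le_exp.mpr (neg_nonpos.mpr (Real.exp_pos _).le)
  have hF₂mono : ∀ x y : ℝ, x ≤ y → F₂ x ≤ F₂ y := by
    intro x y hxy
    rw [hF₂, hF₂]
    apply Real.exp_le_exp.mpr
    apply neg_le_neg
    apply Real.exp_le_exp.mpr
    apply div_le_div_of_nonneg_right ?_ hβ0.le
    · linarith
  -- survival function bound
  have hsurvival : ∀ x s : ℝ, 0 ≤ s →
      1 - F₂ x ≤ Real.exp (s / β) * (1 - F₂ (x + s)) := by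
    intro x s hs
    set a : ℝ := Real.exp (-s / β) with ha
    have ha0 : 0 < a := Real.exp_pos _
    have ha1 : a ≤ 1 := by
      rw [ha, ← Real.exp_zero]
      exact Real.exp_le_exp.mpr (by rw [neg_div]; exact neg_nonpos.mpr (by positivity))
    set y : ℝ := Real.exp (-x / β) with hy
    have hkey : Real.exp (-(a * y)) ≤ a * Real.exp (-y) + (1 - a) := by
      have hconv := convexOn_exp.2 (Set.mem_univ (-y)) (Set.mem_univ (0 : ℝ))
        ha0.le (by linarith : (0:ℝ) ≤ 1 - a) (by ring)
      simp only [smul_eq_mul, mul_zero, add_zero, Real.exp_zero, mul_one] at hconv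
      calc Real.exp (-(a * y)) = Real.exp (a * (-y)) := by ring_nf
        _ ≤ a * Real.exp (-y) + (1 - a) := hconv
    have hF₂x : F₂ x = Real.exp (-y) := by rw [hF₂]
    have hF₂xs : F₂ (x + s) = Real.exp (-(a * y)) := by
      rw [hF₂]
      congr 1
      rw [neg_eq_iff_eq_neg, neg_neg, ha, hy, ← Real.exp_add]
      congr 1
      field_simp
      ring
    have hexp : Real.exp (s / β) = a⁻¹ := by
      rw [ha, ← Real.exp_neg, neg_div, neg_neg]
    rw [hF₂x, hF₂xs, hexp]
    have h1 : a * (1 - Real.exp (-y)) ≤ 1 - Real.exp (-(a * y)) := by nlinarith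
    calc 1 - Real.exp (-y) = a⁻¹ * (a * (1 - Real.exp (-y))) := by field_simp
      _ ≤ a⁻¹ * (1 - Real.exp (-(a * y))) :=
          mul_le_mul_of_nonneg_left h1 (inv_nonneg.mpr ha0.le)
  have h2Δβ : 2 * Δ / β = ε₂ / c := by
    rw [hβ]; field_simp
  -- Laplace density bound
  have hf₁nonneg : ∀ t, 0 ≤ f₁ t := fun t => by rw [hf₁]; positivity
  have hf₁le : ∀ t : ℝ, f₁ t ≤ Real.exp ε₁ * f₁ (t + Δ) := by
    intro t
    rw [hf₁, hf₁, ← mul_assoc, mul_comm (Real.exp ε₁), mul_assoc]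
    apply mul_le_mul_of_nonneg_left ?_ (by positivity)
    rw [← Real.exp_add]
    apply Real.exp_le_exp.mpr
    have habs : |t + Δ| - |t| ≤ Δ := by
      have h := abs_sub_abs_le_abs_sub (t + Δ) t
      simpa [abs_of_pos hΔ] using h
    have h2 : ε₁ * |t + Δ| / Δ - ε₁ * |t| / Δ ≤ ε₁ := by
      rw [div_sub_div_same, div_le_iff₀ hΔ]
      calc ε₁ * |t + Δ| - ε₁ * |t| = ε₁ * (|t + Δ| - |t|) := by ring
        _ ≤ ε₁ * Δ := mul_le_mul_of_nonneg_left habs hε₁.le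
    rw [neg_div, neg_div]
    linarith
  -- pointwise inequality
  set g : ℝ → ℝ := fun t => f₁ t * ((∏ i ∈ Sbot, F₂ (T i + t - q' i)) *
      ∏ j ∈ Stop, (1 - F₂ (T j + t - q' j))) with hg
  have hg_nonneg : ∀ t, 0 ≤ g t := by
    intro t
    apply mul_nonneg (hf₁nonneg t)
    apply mul_nonneg
    · exact Finset.prod_nonneg fun i _ => hF₂nonneg _
    · exact Finset.prod_nonneg fun j _ => by linarith [hF₂le1 (T j + t - q' j)]
  have hpt : ∀ t : ℝ, f₁ t * ((∏ i ∈ Sbot, F₂ (T i + t - q i)) *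
      ∏ j ∈ Stop, (1 - F₂ (T j + t - q j))) ≤
      Real.exp (ε₁ + ε₂) * g (t + Δ) := by
    intro t
    have hbot : (∏ i ∈ Sbot, F₂ (T i + t - q i)) ≤
        ∏ i ∈ Sbot, F₂ (T i + (t + Δ) - q' i) := by
      apply Finset.prod_le_prod (fun i _ => hF₂nonneg _)
      intro i hi
      apply hF₂mono
      have := (abs_le.mp (hsens i (Finset.mem_union_left _ hi))).1
      linarith
    have htop : (∏ j ∈ Stop, (1 - F₂ (T j + t - q j))) ≤
        Real.exp ε₂ * ∏ j ∈ Stop, (1 - F₂ (T j + (t + Δ) - q' j)) := by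
      have step1 : (∏ j ∈ Stop, (1 - F₂ (T j + t - q j))) ≤
          ∏ j ∈ Stop, (Real.exp (ε₂ / c) * (1 - F₂ (T j + (t + Δ) - q' j))) := by
        apply Finset.prod_le_prod
        · intro j _; linarith [hF₂le1 (T j + t - q j)]
        · intro j hj
          have hq := abs_le.mp (hsens j (Finset.mem_union_right _ hj))
          set s : ℝ := Δ + q j - q' j with hs
          have hs0 : 0 ≤ s := by simp only [hs]; linarith [hq.2]
          have hs2 : s ≤ 2 * Δ := by simp only [hs]; linarith [hq.1]
          have h1 := hsurvival (T j + t - q j) s hs0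
          have harg : T j + t - q j + s = T j + (t + Δ) - q' j := by
            simp only [hs]; ring
          rw [harg] at h1
          refine h1.trans (mul_le_mul_of_nonneg_right ?_ ?_)
          · rw [← h2Δβ]
            exact Real.exp_le_exp.mpr (div_le_div_of_nonneg_right hs2 hβ0.le)
          · linarith [hF₂le1 (T j + (t + Δ) - q' j)]
      rw [Finset.prod_mul_distrib, Finset.prod_const, ← Real.exp_nat_mul] at step1
      refine step1.trans (mul_le_mul_of_nonneg_right ?_ ?_)
      · apply Real.exp_le_exp.mpr
        calc (Stop.card : ℝ) * (ε₂ / c) ≤ (c : ℝ) * (ε₂ / c) := by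
              apply mul_le_mul_of_nonneg_right ?_ (by positivity)
              exact_mod_cast hcard
          _ = ε₂ := by field_simp
      · exact Finset.prod_nonneg fun j _ => by linarith [hF₂le1 (T j + (t + Δ) - q' j)]
    have hBnn : 0 ≤ ∏ i ∈ Sbot, F₂ (T i + t - q i) :=
      Finset.prod_nonneg fun i _ => hF₂nonneg _
    have hCnn : 0 ≤ ∏ j ∈ Stop, (1 - F₂ (T j + t - q j)) :=
      Finset.prod_nonneg fun j _ => by linarith [hF₂le1 (T j + t - q j)]
    have hB'nn : 0 ≤ ∏ i ∈ Sbot, F₂ (T i + (t + Δ) - q' i) :=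
      Finset.prod_nonneg fun i _ => hF₂nonneg _
    have hBC : (∏ i ∈ Sbot, F₂ (T i + t - q i)) * ∏ j ∈ Stop, (1 - F₂ (T j + t - q j)) ≤
        (∏ i ∈ Sbot, F₂ (T i + (t + Δ) - q' i)) *
          (Real.exp ε₂ * ∏ j ∈ Stop, (1 - F₂ (T j + (t + Δ) - q' j))) :=
      mul_le_mul hbot htop hCnn hB'nn
    have hfull := mul_le_mul (hf₁le t) hBC (mul_nonneg hBnn hCnn)
      (mul_nonneg (Real.exp_pos _).le (hf₁nonneg _))
    calc f₁ t * ((∏ i ∈ Sbot, F₂ (T i + t - q i)) *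
          ∏ j ∈ Stop, (1 - F₂ (T j + t - q j))) ≤
        Real.exp ε₁ * f₁ (t + Δ) *
          ((∏ i ∈ Sbot, F₂ (T i + (t + Δ) - q' i)) *
            (Real.exp ε₂ * ∏ j ∈ Stop, (1 - F₂ (T j + (t + Δ) - q' j)))) := hfull
      _ = Real.exp (ε₁ + ε₂) * g (t + Δ) := by
          simp only [hg, Real.exp_add]; ring
  -- integrability of g
  have hf₁cont : Continuous f₁ := by
    have : f₁ = fun t => (ε₁ / (2 * Δ)) * Real.exp (-(ε₁ * |t|) / Δ) := funext hf₁
    rw [this]; fun_prop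
  have hF₂cont : Continuous F₂ := by
    have : F₂ = fun x => Real.exp (-Real.exp (-x / (2 * c * Δ / ε₂))) := funext hF₂
    rw [this]; fun_prop
  have hg_cont : Continuous g := by
    apply hf₁cont.mul
    apply Continuous.mul
    · exact continuous_finset_prod _ fun i _ =>
        hF₂cont.comp (by fun_prop)
    · exact continuous_finset_prod _ fun j _ =>
        continuous_const.sub (hF₂cont.comp (by fun_prop))
  have hg_int : Integrable g := by
    refine Integrable.mono'
      ((svt_aux_integrable_exp_neg_mul_abs (b := ε₁ / Δ) (by positivity)).const_mul
        (ε₁ / (2 * Δ)))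
      hg_cont.aestronglyMeasurable ?_
    filter_upwards with t
    rw [Real.norm_eq_abs, abs_of_nonneg (hg_nonneg t)]
    have hprod_le : (∏ i ∈ Sbot, F₂ (T i + t - q' i)) *
        ∏ j ∈ Stop, (1 - F₂ (T j + t - q' j)) ≤ 1 := by
      have h1 : (∏ i ∈ Sbot, F₂ (T i + t - q' i)) ≤ 1 :=
        Finset.prod_le_one (fun i _ => hF₂nonneg _) (fun i _ => hF₂le1 _)
      have h2 : (∏ j ∈ Stop, (1 - F₂ (T j + t - q' j))) ≤ 1 :=
        Finset.prod_le_one (fun j _ => by linarith [hF₂le1 (T j + t - q' j)])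
          (fun j _ => by linarith [hF₂nonneg (T j + t - q' j)])
      have h2' : 0 ≤ ∏ j ∈ Stop, (1 - F₂ (T j + t - q' j)) :=
        Finset.prod_nonneg fun j _ => by linarith [hF₂le1 (T j + t - q' j)]
      calc (∏ i ∈ Sbot, F₂ (T i + t - q' i)) *
          ∏ j ∈ Stop, (1 - F₂ (T j + t - q' j)) ≤ 1 * 1 := by
            apply mul_le_mul h1 h2 h2' zero_le_one
        _ = 1 := by ring
    calc g t ≤ f₁ t * 1 := mul_le_mul_of_nonneg_left hprod_le (hf₁nonneg t)
      _ = ε₁ / (2 * Δ) * Real.exp (-(ε₁ / Δ) * |t|) := by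
          rw [mul_one, hf₁]
          congr 1
          congr 1
          field_simp
  -- integral comparison
  have hG_int : Integrable (fun t => Real.exp (ε₁ + ε₂) * g (t + Δ)) :=
    (hg_int.comp_add_right Δ).const_mul _
  have hmain := integral_mono_of_nonneg
    (ae_of_all _ (fun t => by
      apply mul_nonneg (hf₁nonneg t)
      apply mul_nonneg (Finset.prod_nonneg fun i _ => hF₂nonneg _)
      exact Finset.prod_nonneg fun j _ => by linarith [hF₂le1 (T j + t - q j)]))
    hG_int (ae_of_all _ hpt)
  calc (∫ t : ℝ, f₁ t * ((∏ i ∈ Sbot, F₂ (T i + t - q i)) *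
        ∏ j ∈ Stop, (1 - F₂ (T j + t - q j)))) ≤
      ∫ t : ℝ, Real.exp (ε₁ + ε₂) * g (t + Δ) := hmain
    _ = Real.exp (ε₁ + ε₂) * ∫ t : ℝ, g (t + Δ) := integral_const_mul _ _
    _ = Real.exp (ε₁ + ε₂) * ∫ t : ℝ, g t := by
        rw [integral_add_right_eq_self g Δ]
end

section
/- Let β > 0. For every x ∈ ℝ and every s ≥ 0: 1 − exp(−exp(−x/β)) ≤ exp(s/β) · (1 − exp(−exp(−(x+s)/β))). -/
open Real

/-- Ratio bound on Gumbel survival probabilities. -/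
theorem gumbel_survival_ratio (β : ℝ) (hβ : 0 < β) (x s : ℝ) (hs : 0 ≤ s) :
    1 - Real.exp (-Real.exp (-x / β)) ≤
      Real.exp (s / β) * (1 - Real.exp (-Real.exp (-(x + s) / β))) := by
  set c : ℝ := Real.exp (-s / β) with hc
  set u : ℝ := Real.exp (-x / β) with hu
  have hc0 : 0 < c := Real.exp_pos _
  have hc1 : c ≤ 1 := by
    rw [hc]
    have : -s / β ≤ 0 := div_nonpos_of_nonpos_of_nonneg (by linarith) hβ.le
    exact Real.exp_le_one_iff.mpr this
  have hcu : Real.exp (-(x + s) / β) = c * u := by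
    rw [hc, hu, ← Real.exp_add]; ring_nf
  -- convexity of exp: exp(c * (-u) + (1-c) * 0) ≤ c * exp(-u) + (1-c) * exp 0
  have hconv := convexOn_exp.2 (Set.mem_univ (-u)) (Set.mem_univ (0 : ℝ))
    hc0.le (by linarith : (0:ℝ) ≤ 1 - c) (by ring)
  simp only [smul_eq_mul, mul_zero, add_zero, Real.exp_zero, mul_one] at hconv
  have key : c * (1 - Real.exp (-u)) ≤ 1 - Real.exp (-(c * u)) := by
    have : Real.exp (-(c * u)) = Real.exp (c * -u) := by ring_nf
    rw [this]; linarith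
  have hinv : Real.exp (s / β) = 1 / c := by
    rw [hc, neg_div, Real.exp_neg, one_div, inv_inv]
  rw [hcu, hinv]
  rw [div_mul_eq_mul_div, le_div_iff₀ hc0]
  linarith
end

section
/- Let β > 0 and let G_β(x) = exp(−exp(−x/β)) be the Gumbel CDF with scale β and location 0. Then for all x, s ∈ ℝ: |ln(1 − G_β(x)) − ln(1 − G_β(x+s))| ≤ |s|/β. -/
set_option maxHeartbeats 800000


open Real

lemma gumbel_aux_key (u : ℝ) (hu : 0 < u) : u * Real.exp (-u) ≤ 1 - Real.exp (-u) := by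
  have h := Real.add_one_le_exp u
  have hp := Real.exp_pos (-u)
  have he : Real.exp u * Real.exp (-u) = 1 := by
    rw [← Real.exp_add]; simp
  nlinarith

lemma gumbel_deriv (β : ℝ) (hβ : 0 < β) (x : ℝ) :
    HasDerivAt (fun y => Real.log (1 - Real.exp (-Real.exp (-y / β))))
      (-(Real.exp (-Real.exp (-x / β)) * (Real.exp (-x / β) / β)) /
        (1 - Real.exp (-Real.exp (-x / β)))) x := by
  have h1 : HasDerivAt (fun y : ℝ => -y / β) (-1 / β) x := by
    simpa using (hasDerivAt_id x).neg.div_const β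
  have h2 : HasDerivAt (fun y : ℝ => Real.exp (-y / β))
      (Real.exp (-x / β) * (-1 / β)) x := h1.exp
  have h3 : HasDerivAt (fun y : ℝ => -Real.exp (-y / β))
      (Real.exp (-x / β) / β) x := by
    have := h2.neg
    exact this.congr_deriv (by ring)
  have h4 : HasDerivAt (fun y : ℝ => Real.exp (-Real.exp (-y / β)))
      (Real.exp (-Real.exp (-x / β)) * (Real.exp (-x / β) / β)) x := h3.exp
  have h5 : HasDerivAt (fun y : ℝ => 1 - Real.exp (-Real.exp (-y / β)))
      (-(Real.exp (-Real.exp (-x / β)) * (Real.exp (-x / β) / β))) x := by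
    have := (hasDerivAt_const x (1:ℝ)).sub h4
    simp only [zero_sub] at this
    exact this
  have hne : 1 - Real.exp (-Real.exp (-x / β)) ≠ 0 := by
    have : Real.exp (-Real.exp (-x / β)) < 1 := by
      rw [Real.exp_lt_one_iff]
      simpa using Real.exp_pos (-x / β)
    linarith
  exact h5.log hne

/-- Log-Lipschitz condition on the survival function of the Gumbel distribution. -/
theorem gumbel_survival_log_lipschitz
    (β : ℝ) (hβ : 0 < β)
    (G : ℝ → ℝ)
    (hG : ∀ x : ℝ, G x = Real.exp (-Real.exp (-x / β)))
    (x s : ℝ) :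
    |Real.log (1 - G x) - Real.log (1 - G (x + s))| ≤ |s| / β := by
  set f : ℝ → ℝ := fun y => Real.log (1 - Real.exp (-Real.exp (-y / β))) with hf
  have key : ∀ y ∈ (Set.univ : Set ℝ), ‖deriv f y‖ ≤ 1 / β := by
    intro y _
    have hd := gumbel_deriv β hβ y
    rw [hd.deriv]
    set u := Real.exp (-y / β) with hu
    have hu0 : 0 < u := Real.exp_pos _
    set g := Real.exp (-u) with hg
    have hg0 : 0 < g := Real.exp_pos _
    have hg1 : g < 1 := by
      rw [hg, Real.exp_lt_one_iff]; linarith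
    have hkey : u * g ≤ 1 - g := gumbel_aux_key u hu0
    rw [Real.norm_eq_abs, abs_div, abs_neg, abs_of_nonneg (by positivity),
      abs_of_pos (by linarith : (0:ℝ) < 1 - g)]
    rw [div_le_div_iff₀ (by linarith) hβ]
    have : g * (u / β) * β = u * g := by field_simp
    rw [this]
    linarith
  have hdiff : ∀ y ∈ (Set.univ : Set ℝ), DifferentiableAt ℝ f y := fun y _ =>
    (gumbel_deriv β hβ y).differentiableAt
  have := (convex_univ (𝕜 := ℝ) (E := ℝ)).norm_image_sub_le_of_norm_deriv_le
    hdiff key (Set.mem_univ (x + s)) (Set.mem_univ x)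
  rw [hG, hG]
  calc |f x - f (x + s)| = ‖f x - f (x + s)‖ := (Real.norm_eq_abs _).symm
    _ ≤ 1 / β * ‖x - (x + s)‖ := this
    _ = |s| / β := by rw [Real.norm_eq_abs]; rw [show x - (x + s) = -s by ring, abs_neg]; ring
end

section
/- Let Γ : ℝ → ℝ be continuous and nondecreasing with Γ(r) → 0 as r → −∞ and Γ(r) → 1 as r → +∞. Let α ≥ 0 and let k ≥ 1 be a natural number, and define p(r) = (Γ(r+α))^k · (1 − Γ(r−α)). Then p attains a maximum value on ℝ, i.e., there exists r₀ ∈ ℝ with p(r) ≤ p(r₀) for all r ∈ ℝ, and moreover p(r₀) ≥ k^k/(k+1)^{k+1}. -/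
open Filter

/-- The SVT success probability p(r) = Γ(r+α)^k·(1−Γ(r−α)) attains a maximum on ℝ,
and the maximum is at least k^k/(k+1)^(k+1). -/
theorem svt_success_prob_max
    (Γ : ℝ → ℝ) (hcont : Continuous Γ) (hmono : Monotone Γ)
    (hbot : Tendsto Γ atBot (nhds 0))
    (htop : Tendsto Γ atTop (nhds 1))
    (α : ℝ) (hα : 0 ≤ α) (k : ℕ) (hk : 1 ≤ k) :
    ∃ r₀ : ℝ,
      (∀ r : ℝ, (Γ (r + α)) ^ k * (1 - Γ (r - α)) ≤
        (Γ (r₀ + α)) ^ k * (1 - Γ (r₀ - α))) ∧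
      (k : ℝ) ^ k / ((k : ℝ) + 1) ^ (k + 1) ≤
        (Γ (r₀ + α)) ^ k * (1 - Γ (r₀ - α)) := by
  set p : ℝ → ℝ := fun r => (Γ (r + α)) ^ k * (1 - Γ (r - α)) with hp
  have hk0 : (0:ℝ) < k := by exact_mod_cast hk
  set y : ℝ := (k:ℝ)/((k:ℝ)+1) with hy
  have hy0 : 0 < y := by positivity
  have hy1 : y < 1 := by rw [hy, div_lt_one (by positivity)]; linarith
  set c : ℝ := (k : ℝ) ^ k / ((k : ℝ) + 1) ^ (k + 1) with hc
  have hc0 : 0 < c := by positivity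
  -- Γ takes values in [0,1]
  have hΓ0 : ∀ x, 0 ≤ Γ x := fun x =>
    le_of_tendsto hbot (eventually_atBot.2 ⟨x, fun z hz => hmono hz⟩)
  have hΓ1 : ∀ x, Γ x ≤ 1 := fun x =>
    ge_of_tendsto htop (eventually_atTop.2 ⟨x, fun z hz => hmono hz⟩)
  have hp0 : ∀ r, 0 ≤ p r := fun r =>
    mul_nonneg (pow_nonneg (hΓ0 _) _) (by linarith [hΓ1 (r - α)])
  -- p tends to 0 at -∞
  have hBot : Tendsto p atBot (nhds 0) := by
    have hB : Tendsto (fun r => Γ (r + α)) atBot (nhds 0) :=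
      hbot.comp (tendsto_atBot_add_const_right _ α tendsto_id)
    have hBk : Tendsto (fun r => (Γ (r + α)) ^ k) atBot (nhds 0) := by
      have := hB.pow k
      rwa [zero_pow (by omega)] at this
    refine squeeze_zero hp0 (fun r => ?_) hBk
    calc p r ≤ (Γ (r + α)) ^ k * 1 :=
          mul_le_mul_of_nonneg_left (by linarith [hΓ0 (r - α)]) (pow_nonneg (hΓ0 _) _)
      _ = (Γ (r + α)) ^ k := mul_one _
  -- p tends to 0 at +∞
  have hTop : Tendsto p atTop (nhds 0) := by
    have hT : Tendsto (fun r => 1 - Γ (r - α)) atTop (nhds 0) := by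
      have := (tendsto_const_nhds (x := (1:ℝ)) (f := atTop)).sub
        (htop.comp (tendsto_atTop_add_const_right _ (-α) tendsto_id))
      simpa [sub_eq_add_neg] using this
    refine squeeze_zero hp0 (fun r => ?_) hT
    calc p r ≤ 1 * (1 - Γ (r - α)) :=
          mul_le_mul_of_nonneg_right (pow_le_one₀ (hΓ0 _) (hΓ1 _)) (by linarith [hΓ1 (r - α)])
      _ = 1 - Γ (r - α) := one_mul _
  -- find r* with Γ r* = y
  have ⟨a, ha⟩ : ∃ a, Γ a < y := (hbot.eventually (gt_mem_nhds hy0)).exists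
  have ⟨b, hb⟩ : ∃ b, y < Γ b := (htop.eventually (lt_mem_nhds hy1)).exists
  have hab : a ≤ b := by
    by_contra h
    exact absurd (hmono (le_of_not_ge h)) (by linarith)
  obtain ⟨r, -, hr⟩ := intermediate_value_Icc hab hcont.continuousOn ⟨ha.le, hb.le⟩
  -- p r ≥ c
  have hpr : c ≤ p r := by
    have h1 : y ≤ Γ (r + α) := hr ▸ hmono (by linarith)
    have h2 : Γ (r - α) ≤ y := hr ▸ hmono (by linarith)
    have hyk : y ^ k ≤ (Γ (r + α)) ^ k := pow_le_pow_left₀ hy0.le h1 k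
    have hceq : c = y ^ k * (1 - y) := by
      rw [hc, hy, div_pow, pow_succ]
      field_simp
      ring
    rw [hceq]
    exact mul_le_mul hyk (by linarith) (by linarith) (pow_nonneg (hΓ0 _) _)
  -- p attains its max
  have hpcont : Continuous p := by
    apply Continuous.mul
    · exact (hcont.comp (continuous_id.add continuous_const)).pow k
    · exact continuous_const.sub (hcont.comp (continuous_id.sub continuous_const))
  have hco : Tendsto p (cocompact ℝ) (nhds 0) := by
    rw [cocompact_eq_atBot_atTop]
    exact Tendsto.sup hBot hTop
  have hev : ∀ᶠ x in cocompact ℝ, p x ≤ p r := by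
    filter_upwards [hco.eventually (gt_mem_nhds hc0)] with x hx
    linarith
  obtain ⟨r₀, hr₀⟩ := hpcont.exists_forall_ge' r hev
  exact ⟨r₀, hr₀, le_trans hpr (hr₀ r)⟩
end

section
/- Let A, B > 0 and define f(w) = A·(w+1)² + B·(w+1)²/w² for w > 0. Then for every w > 0: f(w) ≥ f((B/A)^{1/3}); that is, f is minimized over (0, ∞) at w = (B/A)^{1/3}. -/
open Real

/-- Generic privacy-budget allocation optimization: f(w) = A(w+1)² + B(w+1)²/w²
is minimized over (0,∞) at w = (B/A)^(1/3). -/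
theorem budget_allocation_min
    (A B : ℝ) (hA : 0 < A) (hB : 0 < B)
    (f : ℝ → ℝ)
    (hf : ∀ w : ℝ, f w = A * (w + 1) ^ 2 + B * (w + 1) ^ 2 / w ^ 2)
    (w : ℝ) (hw : 0 < w) :
    f ((B / A) ^ ((1 : ℝ) / 3)) ≤ f w := by
  set c : ℝ := (B / A) ^ ((1 : ℝ) / 3) with hc
  have hBA : (0 : ℝ) < B / A := div_pos hB hA
  have hcpos : 0 < c := rpow_pos_of_pos hBA _
  have hc3 : c ^ 3 = B / A := by
    rw [hc, ← rpow_natCast ((B / A) ^ ((1 : ℝ) / 3)) 3, ← rpow_mul hBA.le]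
    norm_num
  have hB' : B = A * c ^ 3 := by
    field_simp at hc3
    linarith [hc3]
  rw [hf, hf, hB']
  have h1 : A * c ^ 3 * (c + 1) ^ 2 / c ^ 2 = A * c * (c + 1) ^ 2 := by
    field_simp
  rw [h1, ← sub_nonneg]
  have h2 : A * (w + 1) ^ 2 + A * c ^ 3 * (w + 1) ^ 2 / w ^ 2
      - (A * (c + 1) ^ 2 + A * c * (c + 1) ^ 2)
      = A * (w - c) ^ 2 * (w ^ 2 + 2 * (1 + c) * w + c) / w ^ 2 := by
    field_simp
    ring
  rw [h2]
  positivity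
end

section
/- Let Δ, ε > 0 and c > 0, and define V(w) = 2·((w+1)·Δ/ε)² + (2c·(w+1)·Δ/(w·ε))² for w > 0. Then for every w > 0: V(w) ≥ V((√2·c)^{2/3}); that is, V is minimized over (0, ∞) at w = (√2·c)^{2/3}. -/
open Real

/-- Optimal privacy-budget allocation for SVT-Exp:
V(w) = 2((w+1)Δ/ε)² + (2c(w+1)Δ/(wε))² is minimized at w = (√2·c)^(2/3). -/
theorem svt_exp_allocation_min
    (Δ ε c : ℝ) (hΔ : 0 < Δ) (hε : 0 < ε) (hc : 0 < c)
    (V : ℝ → ℝ)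
    (hV : ∀ w : ℝ, V w =
      2 * ((w + 1) * Δ / ε) ^ 2 + (2 * c * (w + 1) * Δ / (w * ε)) ^ 2)
    (w : ℝ) (hw : 0 < w) :
    V ((Real.sqrt 2 * c) ^ ((2 : ℝ) / 3)) ≤ V w := by
  set K : ℝ := (Real.sqrt 2 * c) ^ ((2 : ℝ) / 3) with hKdef
  have hs2 : (0:ℝ) < Real.sqrt 2 := Real.sqrt_pos.mpr (by norm_num)
  have hbase : (0:ℝ) < Real.sqrt 2 * c := mul_pos hs2 hc
  have hK : 0 < K := Real.rpow_pos_of_pos hbase _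
  have hK3 : K ^ 3 = 2 * c ^ 2 := by
    have h1 : K ^ 3 = (Real.sqrt 2 * c) ^ (((2:ℝ)/3) * 3) := by
      rw [hKdef, ← Real.rpow_natCast (_ ^ ((2:ℝ)/3)) 3, ← Real.rpow_mul hbase.le]
      norm_num
    rw [h1, show (2:ℝ)/3*3 = ((2:ℕ):ℝ) by norm_num, Real.rpow_natCast,
      mul_pow, Real.sq_sqrt (by norm_num : (0:ℝ) ≤ 2)]
  have hform : ∀ u : ℝ, 0 < u →
      2 * ((u + 1) * Δ / ε) ^ 2 + (2 * c * (u + 1) * Δ / (u * ε)) ^ 2 =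
      2 * (Δ / ε) ^ 2 * ((u + 1) ^ 2 * (u ^ 2 + K ^ 3) / u ^ 2) := by
    intro u hu
    rw [hK3]
    field_simp
  rw [hV, hV, hform K hK, hform w hw]
  have hpos : 0 < 2 * (Δ / ε) ^ 2 := by positivity
  apply mul_le_mul_of_nonneg_left _ hpos.le
  rw [div_le_div_iff₀ (by positivity) (by positivity)]
  have hfac : (w + 1) ^ 2 * (w ^ 2 + K ^ 3) * K ^ 2 -
      (K + 1) ^ 2 * (K ^ 2 + K ^ 3) * w ^ 2 =
      K ^ 2 * ((w - K) ^ 2 * (w ^ 2 + (2 + 2 * K) * w + K)) := by ring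
  nlinarith [sq_nonneg (w - K), sq_nonneg K, mul_pos hw hK,
    mul_nonneg (mul_nonneg (sq_nonneg K) (sq_nonneg (w - K)))
      (by positivity : (0:ℝ) ≤ w ^ 2 + (2 + 2 * K) * w + K)]
end

section
/- Let Δ, ε > 0 and c > 0, and define V(w) = 2·((w+1)·Δ/ε)² + (π²/6)·(2c·(w+1)·Δ/(w·ε))² for w > 0. Then for every w > 0: V(w) ≥ V((π·c/√3)^{2/3}); that is, V is minimized over (0, ∞) at w = (π·c/√3)^{2/3}. -/
open Real

/-- Optimal privacy-budget allocation for SVT-Gum: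
V(w) = 2((w+1)Δ/ε)² + (π²/6)(2c(w+1)Δ/(wε))² is minimized at w = (πc/√3)^(2/3). -/
theorem svt_gum_allocation_min
    (Δ ε c : ℝ) (hΔ : 0 < Δ) (hε : 0 < ε) (hc : 0 < c)
    (V : ℝ → ℝ)
    (hV : ∀ w : ℝ, V w =
      2 * ((w + 1) * Δ / ε) ^ 2 +
        (Real.pi ^ 2 / 6) * (2 * c * (w + 1) * Δ / (w * ε)) ^ 2)
    (w : ℝ) (hw : 0 < w) :
    V ((Real.pi * c / Real.sqrt 3) ^ ((2 : ℝ) / 3)) ≤ V w := by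
  set x : ℝ := Real.pi * c / Real.sqrt 3 with hxdef
  have hs3 : (0:ℝ) < Real.sqrt 3 := Real.sqrt_pos.mpr (by norm_num)
  have hx : 0 < x := div_pos (mul_pos Real.pi_pos hc) hs3
  set t : ℝ := x ^ ((2:ℝ)/3) with htdef
  have ht : 0 < t := Real.rpow_pos_of_pos hx _
  have ht3 : t ^ 3 = Real.pi ^ 2 * c ^ 2 / 3 := by
    have h1 : t ^ (3:ℕ) = x ^ ((2:ℝ)) := by
      rw [htdef, ← Real.rpow_natCast (x ^ ((2:ℝ)/3)) 3, ← Real.rpow_mul hx.le]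
      norm_num
    have h3 : x ^ 2 = Real.pi ^ 2 * c ^ 2 / 3 := by
      rw [hxdef, div_pow, mul_pow, Real.sq_sqrt (by norm_num : (3:ℝ) ≥ 0)]
    rw [h1, show (2:ℝ) = ((2:ℕ):ℝ) by norm_num, Real.rpow_natCast]
    exact h3
  have hpi : Real.pi ^ 2 = 3 * t ^ 3 / c ^ 2 := by
    rw [ht3]; field_simp
  have hVu : ∀ u : ℝ, 0 < u →
      V u = (2 * Δ ^ 2 / ε ^ 2) * ((u + 1) ^ 2 * (u ^ 2 + t ^ 3) / u ^ 2) := by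
    intro u hu
    rw [hV u, hpi]
    field_simp
    ring
  have main : (t + 1) ^ 2 * (t ^ 2 + t ^ 3) / t ^ 2 ≤
      (w + 1) ^ 2 * (w ^ 2 + t ^ 3) / w ^ 2 := by
    rw [div_le_div_iff₀ (by positivity) (by positivity)]
    nlinarith [mul_nonneg (mul_nonneg (sq_nonneg t) (mul_nonneg hw.le (sq_nonneg (w - t))))
        (by positivity : (0:ℝ) ≤ w + 2 * t),
      mul_nonneg (mul_nonneg (sq_nonneg t) (sq_nonneg (w - t)))
        (by positivity : (0:ℝ) ≤ 2 * w + t)]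
  rw [hVu w hw, hVu t ht]
  exact mul_le_mul_of_nonneg_left main (by positivity)
end

section
/- Let Δ, ε > 0 and c > 0, and define V(w) = 2·((w+1)·Δ/ε)² + 2·(2c·(w+1)·Δ/(w·ε))² for w > 0. Then for every w > 0: V(w) ≥ V((2c)^{2/3}); that is, V is minimized over (0, ∞) at w = (2c)^{2/3}. -/
open Real

/-- Optimal privacy-budget allocation for SVT-Lap:
V(w) = 2((w+1)Δ/ε)² + 2(2c(w+1)Δ/(wε))² is minimized at w = (2c)^(2/3). -/
theorem svt_lap_allocation_min
    (Δ ε c : ℝ) (hΔ : 0 < Δ) (hε : 0 < ε) (hc : 0 < c)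
    (V : ℝ → ℝ)
    (hV : ∀ w : ℝ, V w =
      2 * ((w + 1) * Δ / ε) ^ 2 + 2 * (2 * c * (w + 1) * Δ / (w * ε)) ^ 2)
    (w : ℝ) (hw : 0 < w) :
    V ((2 * c) ^ ((2 : ℝ) / 3)) ≤ V w := by
  set t : ℝ := (2 * c) ^ ((2 : ℝ) / 3) with ht_def
  have h2c : 0 < 2 * c := by linarith
  have ht : 0 < t := rpow_pos_of_pos h2c _
  have ht3 : t ^ 3 = (2 * c) ^ 2 := by
    rw [ht_def, ← rpow_natCast ((2*c) ^ ((2:ℝ)/3)) 3, ← rpow_mul h2c.le]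
    norm_num
  have hεne : ε ≠ 0 := hε.ne'
  have hwne : w ≠ 0 := hw.ne'
  have htne : t ≠ 0 := ht.ne'
  have core : w ^ 2 * (t + 1) ^ 3 ≤ (w + 1) ^ 2 * (w ^ 2 + t ^ 3) := by
    nlinarith [mul_nonneg (sq_nonneg (w - t))
      (by positivity : (0:ℝ) ≤ w ^ 2 + (2 + 2 * t) * w + t)]
  have key : ∀ u : ℝ, 2 * (2 * c * (u + 1) * Δ / (u * ε)) ^ 2
      = 2 * t ^ 3 * ((u + 1) * Δ / (u * ε)) ^ 2 := by
    intro u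
    rw [show 2 * c * (u + 1) * Δ / (u * ε) = (2 * c) * ((u + 1) * Δ / (u * ε)) by ring,
      mul_pow, ← ht3]
    ring
  have hVt : V t = 2 * Δ ^ 2 / (ε ^ 2 * w ^ 2) * (w ^ 2 * (t + 1) ^ 3) := by
    rw [hV, key]
    field_simp
    ring
  have hVw : V w = 2 * Δ ^ 2 / (ε ^ 2 * w ^ 2) * ((w + 1) ^ 2 * (w ^ 2 + t ^ 3)) := by
    rw [hV, key]
    field_simp
  rw [hVt, hVw]
  exact mul_le_mul_of_nonneg_left core (by positivity)
end

section
/- Let b > 0, λ > 0, and t ≤ 0. Then ∫_{−∞}^{∞} (1/(2b))·exp(−|y|/b) · F_Exp(λ)(t+y) dy = b·exp(t/b) / (2·(1/λ + b)), where F_Exp(λ)(x) = 1 − exp(−λx) for x ≥ 0 and F_Exp(λ)(x) = 0 for x < 0. -/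
open MeasureTheory Real

lemma integral_exp_neg_mul_Ioi' {a : ℝ} (ha : 0 < a) (c : ℝ) :
    (∫ x in Set.Ioi c, Real.exp (-(a * x))) = Real.exp (-(a * c)) / a := by
  have h := MeasureTheory.integral_comp_mul_left_Ioi (fun x => Real.exp (-x)) c ha
  simp only [smul_eq_mul] at h
  rw [h, integral_exp_neg_Ioi]
  rw [div_eq_inv_mul]

/-- CDF of the difference of an exponential and an independent Laplace random
variable, negative branch (t ≤ 0). -/
theorem exp_laplace_diff_cdf_neg
    (b lam : ℝ) (hb : 0 < b) (hlam : 0 < lam) (t : ℝ) (ht : t ≤ 0) :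
    (∫ y : ℝ, (1 / (2 * b)) * Real.exp (-|y| / b) *
        (if 0 ≤ t + y then 1 - Real.exp (-lam * (t + y)) else 0)) =
      b * Real.exp (t / b) / (2 * (1 / lam + b)) := by
  have hbinv : 0 < 1 / b := by positivity
  have hsum : 0 < 1 / b + lam := by positivity
  -- rewrite integrand as an indicator of Ici (-t)
  have key : (fun y : ℝ => (1 / (2 * b)) * Real.exp (-|y| / b) *
        (if 0 ≤ t + y then 1 - Real.exp (-lam * (t + y)) else 0)) =
      Set.indicator (Set.Ici (-t)) (fun y =>
        (1 / (2 * b)) * (Real.exp (-((1/b) * y)) -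
          Real.exp (-lam * t) * Real.exp (-((1/b + lam) * y)))) := by
    funext y
    by_cases h : 0 ≤ t + y
    · have hy : y ∈ Set.Ici (-t) := by simp [Set.mem_Ici]; linarith
      have hy0 : 0 ≤ y := by linarith
      rw [Set.indicator_of_mem hy, if_pos h, abs_of_nonneg hy0]
      have h3 : -y / b = -(1 / b * y) := by ring
      rw [h3]
      have h4 : Real.exp (-(1 / b * y)) * Real.exp (-lam * (t + y)) =
          Real.exp (-lam * t) * Real.exp (-((1 / b + lam) * y)) := by
        rw [← Real.exp_add, ← Real.exp_add]; congr 1; ring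
      linear_combination (-(1 / (2 * b))) * h4
    · have hy : y ∉ Set.Ici (-t) := by simp [Set.mem_Ici]; linarith
      rw [Set.indicator_of_notMem hy, if_neg h, mul_zero]
  rw [key, MeasureTheory.integral_indicator measurableSet_Ici,
    MeasureTheory.integral_Ici_eq_integral_Ioi]
  have h1 : IntegrableOn (fun y : ℝ => Real.exp (-((1/b) * y))) (Set.Ioi (-t)) := by
    simpa only [neg_mul] using exp_neg_integrableOn_Ioi (-t) hbinv
  have h2 : IntegrableOn (fun y : ℝ => Real.exp (-lam * t) *
      Real.exp (-((1/b + lam) * y))) (Set.Ioi (-t)) := by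
    apply Integrable.const_mul
    simpa only [neg_mul, IntegrableOn] using exp_neg_integrableOn_Ioi (-t) hsum
  rw [MeasureTheory.integral_const_mul, MeasureTheory.integral_sub h1 h2,
    MeasureTheory.integral_const_mul, integral_exp_neg_mul_Ioi' hbinv,
    integral_exp_neg_mul_Ioi' hsum]
  have e1 : -(1/b * -t) = t / b := by field_simp
  have e2 : Real.exp (-lam * t) * (Real.exp (-((1/b + lam) * -t)) / (1/b + lam))
      = Real.exp (t / b) / (1/b + lam) := by
    rw [mul_div_assoc', ← Real.exp_add]
    congr 1
    field_simp
    ring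
  rw [e1, e2]
  have hne : 1 / b + lam ≠ 0 := hsum.ne'
  have hne2 : 1 / lam + b ≠ 0 := by positivity
  field_simp
  ring
end

section
/- Let b > 0 and λ > 0 with b ≠ 1/λ, and let t ≥ 0. Then ∫_{−∞}^{∞} (1/(2b))·exp(−|y|/b) · F_Exp(λ)(t+y) dy = 1 + ((1/λ)²·exp(−λt)) / (b² − (1/λ)²) − (b·exp(−t/b)) / (2·(b − 1/λ)), where F_Exp(λ)(x) = 1 − exp(−λx) for x ≥ 0 and F_Exp(λ)(x) = 0 for x < 0. -/
open MeasureTheory Real Set Filter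
open scoped Topology

lemma my_int_exp_mul (c : ℝ) (hc : c ≠ 0) (a b : ℝ) :
    ∫ y in a..b, Real.exp (c * y) = (Real.exp (c * b) - Real.exp (c * a)) / c := by
  have hd : ∀ x ∈ Set.uIcc a b, HasDerivAt (fun y => Real.exp (c * y) / c)
      (Real.exp (c * x)) x := by
    intro x _
    have h := (((hasDerivAt_id x).const_mul c).exp).div_const c
    refine h.congr_deriv ?_
    field_simp; simp
  rw [intervalIntegral.integral_eq_sub_of_hasDerivAt hd
    ((Real.continuous_exp.comp (continuous_const.mul continuous_id)).intervalIntegrable a b)]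
  ring

lemma my_int_exp_neg_mul_Ioi {c : ℝ} (hc : 0 < c) (a : ℝ) :
    ∫ y in Set.Ioi a, Real.exp (-c * y) = Real.exp (-c * a) / c := by
  have hd : ∀ x ∈ Set.Ici a, HasDerivAt (fun y => -Real.exp (-c * y) / c)
      (Real.exp (-c * x)) x := by
    intro x _
    have h := ((((hasDerivAt_id x).const_mul (-c)).exp).neg).div_const c
    refine h.congr_deriv ?_
    field_simp; simp
  have htend : Tendsto (fun y => -Real.exp (-c * y) / c) atTop (𝓝 ((-0 : ℝ) / c)) := by
    refine Tendsto.div_const (Tendsto.neg ?_) _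
    exact Real.tendsto_exp_atBot.comp (tendsto_id.const_mul_atTop_of_neg (by linarith))
  have h := integral_Ioi_of_hasDerivAt_of_tendsto' hd (exp_neg_integrableOn_Ioi a hc) htend
  rw [h]
  field_simp
  ring

/-- CDF of the difference of an exponential and an independent Laplace random
variable, nonnegative branch (t ≥ 0). -/
theorem exp_laplace_diff_cdf_nonneg
    (b lam : ℝ) (hb : 0 < b) (hlam : 0 < lam) (hne : b ≠ 1 / lam)
    (t : ℝ) (ht : 0 ≤ t) :
    (∫ y : ℝ, (1 / (2 * b)) * Real.exp (-|y| / b) *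
        (if 0 ≤ t + y then 1 - Real.exp (-lam * (t + y)) else 0)) =
      1 + (1 / lam) ^ 2 * Real.exp (-lam * t) / (b ^ 2 - (1 / lam) ^ 2) -
        b * Real.exp (-t / b) / (2 * (b - 1 / lam)) := by
  have hb0 : b ≠ 0 := ne_of_gt hb
  have hl0 : lam ≠ 0 := ne_of_gt hlam
  have hinvb : 0 < 1 / b := by positivity
  have hsum : 0 < 1 / b + lam := by positivity
  have hdiff : 1 / b - lam ≠ 0 := by
    intro h
    apply hne
    have h1 : 1 / b = lam := by linarith
    field_simp at h1 ⊢
    linarith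
  set g : ℝ → ℝ := fun y => 1 / (2 * b) * Real.exp (-|y| / b) * (1 - Real.exp (-lam * (t + y)))
    with hg
  have hgcont : Continuous g := by
    apply Continuous.mul
    · exact continuous_const.mul (Real.continuous_exp.comp
        ((continuous_abs.neg).div_const b))
    · exact continuous_const.sub (Real.continuous_exp.comp
        (continuous_const.mul (continuous_const.add continuous_id)))
  have hind : (fun y : ℝ => (1 / (2 * b)) * Real.exp (-|y| / b) *
      (if 0 ≤ t + y then 1 - Real.exp (-lam * (t + y)) else 0)) =
      Set.indicator (Set.Ici (-t)) g := by
    funext y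
    rw [Set.indicator_apply]
    by_cases h : 0 ≤ t + y
    · rw [if_pos h, if_pos (by simp only [Set.mem_Ici]; linarith)]
    · rw [if_neg h, if_neg (by simp only [Set.mem_Ici]; intro hy; exact h (by linarith)), mul_zero]
  rw [hind, integral_indicator measurableSet_Ici, integral_Ici_eq_integral_Ioi]
  have hsplit : Set.Ioi (-t) = Set.Ioc (-t) 0 ∪ Set.Ioi 0 :=
    (Set.Ioc_union_Ioi_eq_Ioi (by linarith)).symm
  have hIoi_eq : ∀ y ∈ Set.Ioi (0:ℝ), g y =
      1 / (2 * b) * Real.exp (-(1/b) * y)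
        - 1 / (2 * b) * Real.exp (-lam * t) * Real.exp (-(1/b + lam) * y) := by
    intro y hy
    have hy0 : 0 < y := hy
    show 1 / (2 * b) * Real.exp (-|y| / b) * (1 - Real.exp (-lam * (t + y))) = _
    rw [abs_of_pos hy0,
      show -lam * (t + y) = -lam * t + -lam * y by ring,
      show -(1/b + lam) * y = -y / b + -lam * y by ring,
      show -(1/b) * y = -y / b by ring,
      Real.exp_add, Real.exp_add]
    ring
  have hint2 : IntegrableOn g (Set.Ioi 0) := by
    apply IntegrableOn.congr_fun _ (fun y hy => (hIoi_eq y hy).symm) measurableSet_Ioi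
    exact ((exp_neg_integrableOn_Ioi 0 hinvb).const_mul _).sub
      ((exp_neg_integrableOn_Ioi 0 hsum).const_mul _)
  have hint1 : IntegrableOn g (Set.Ioc (-t) 0) := hgcont.integrableOn_Ioc
  rw [hsplit, setIntegral_union (Set.Ioc_disjoint_Ioi le_rfl) measurableSet_Ioi hint1 hint2]
  have hIoi : ∫ y in Set.Ioi (0:ℝ), g y =
      1 / (2 * b) * b - 1 / (2 * b) * Real.exp (-lam * t) * (1 / (1/b + lam)) := by
    rw [setIntegral_congr_fun measurableSet_Ioi hIoi_eq, integral_sub, integral_const_mul,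
      integral_const_mul, my_int_exp_neg_mul_Ioi hinvb 0, my_int_exp_neg_mul_Ioi hsum 0]
    · simp only [mul_zero, Real.exp_zero]
      field_simp
    · exact (exp_neg_integrableOn_Ioi 0 hinvb).const_mul _
    · exact (exp_neg_integrableOn_Ioi 0 hsum).const_mul _
  have hIoc_eq : ∀ y ∈ Set.Ioc (-t) (0:ℝ), g y =
      1 / (2 * b) * Real.exp ((1/b) * y)
        - 1 / (2 * b) * Real.exp (-lam * t) * Real.exp ((1/b - lam) * y) := by
    intro y hy
    have hy0 : y ≤ 0 := hy.2
    show 1 / (2 * b) * Real.exp (-|y| / b) * (1 - Real.exp (-lam * (t + y))) = _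
    rw [abs_of_nonpos hy0,
      show -(-y) / b = (1/b) * y by ring,
      show -lam * (t + y) = -lam * t + -lam * y by ring,
      show (1/b - lam) * y = (1/b) * y + -lam * y by ring,
      Real.exp_add, Real.exp_add]
    ring
  have hIoc : ∫ y in Set.Ioc (-t) (0:ℝ), g y =
      1 / (2 * b) * ((1 - Real.exp ((1/b) * (-t))) / (1/b))
        - 1 / (2 * b) * Real.exp (-lam * t) *
          ((1 - Real.exp ((1/b - lam) * (-t))) / (1/b - lam)) := by
    rw [setIntegral_congr_fun measurableSet_Ioc hIoc_eq,
      ← intervalIntegral.integral_of_le (by linarith : -t ≤ (0:ℝ)),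
      intervalIntegral.integral_sub, intervalIntegral.integral_const_mul,
      intervalIntegral.integral_const_mul, my_int_exp_mul _ (ne_of_gt hinvb),
      my_int_exp_mul _ hdiff]
    · simp only [mul_zero, Real.exp_zero]
    · exact ((Real.continuous_exp.comp (continuous_const.mul continuous_id)).intervalIntegrable _ _).const_mul _
    · exact ((Real.continuous_exp.comp (continuous_const.mul continuous_id)).intervalIntegrable _ _).const_mul _
  rw [hIoc, hIoi]
  have hAC : Real.exp (-lam * t) * Real.exp ((1/b - lam) * (-t)) = Real.exp (-t / b) := by
    rw [← Real.exp_add]; congr 1; ring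
  have hB : Real.exp ((1/b) * (-t)) = Real.exp (-t / b) := by congr 1; ring
  rw [hB, ← hAC]
  set A := Real.exp (-lam * t) with hA
  set C := Real.exp ((1/b - lam) * (-t)) with hC
  have hbl : b - 1 / lam ≠ 0 := sub_ne_zero.mpr hne
  have hbl2 : b + 1 / lam ≠ 0 := by positivity
  have hsq : b ^ 2 - (1 / lam) ^ 2 ≠ 0 := by
    have h2 : b ^ 2 - (1 / lam) ^ 2 = (b - 1/lam) * (b + 1/lam) := by ring
    rw [h2]; exact mul_ne_zero hbl hbl2
  have h1 : b * lam ≠ 1 := by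
    intro h
    apply hne
    field_simp
    linarith
  have h1' : b * lam - 1 ≠ 0 := sub_ne_zero.mpr h1
  have h1'' : 1 - b * lam ≠ 0 := fun h => h1' (by linarith)
  have h2 : b * lam + 1 ≠ 0 := by positivity
  have h3 : b ^ 2 * lam ^ 2 - 1 ≠ 0 := by
    have : b ^ 2 * lam ^ 2 - 1 = (b * lam - 1) * (b * lam + 1) := by ring
    rw [this]; exact mul_ne_zero h1' h2
  field_simp
  ring
end
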